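/- Let f : X → ℝ ∪ {±∞} be a convex function with nonempty domain whose lower semicontinuous hull cl f is improper (takes the value −∞ somewhere). Then the closure of the positive part f⁺ := max{f, 0} equals the positive part of cl f, and both equal the indicator function of dom(cl f): cl(f⁺) = (cl f)⁺ = I_{dom(cl f)}. -/

import Mathlib

open Set
open scoped RealInnerProductSpace Pointwise

noncomputable section

abbrev E (n : ℕ) := EuclideanSpace ℝ (Fin n)

/-- Recession cone with the convention `[∅]_∞ = {0}`. -/
def recCone {X : Type*} [NormedAddCommGroup X] [InnerProductSpace ℝ X] (C : Set X) : Set X :=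
  {d | (C = ∅ ∧ d = 0) ∨ (C.Nonempty ∧ ∀ a ∈ C, a + d ∈ C)}

/-- Closed convex hull. -/
def clco {X : Type*} [NormedAddCommGroup X] [InnerProductSpace ℝ X] (A : Set X) : Set X :=
  closure (convexHull ℝ A)

/-- ε-normal set to `C` at `x`. -/
def eNormal {X : Type*} [NormedAddCommGroup X] [InnerProductSpace ℝ X]
    (C : Set X) (x : X) (ε : ℝ) : Set X :=
  {v | ∀ y ∈ C, ⟪v, y - x⟫ ≤ ε}

/-- ε-subdifferential of an extended-real-valued function, empty unless `f x` is finite. -/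
def eSubdiff {X : Type*} [NormedAddCommGroup X] [InnerProductSpace ℝ X]
    (f : X → EReal) (x : X) (ε : ℝ) : Set X :=
  {v | (∃ r : ℝ, f x = (r : EReal)) ∧
    ∀ y, ((⟪v, y - x⟫ : ℝ) : EReal) + f x ≤ f y + (ε : EReal)}

/-- Convexity of an extended-real-valued function, via its epigraph. -/
def EpiConvex {X : Type*} [NormedAddCommGroup X] [InnerProductSpace ℝ X]
    (f : X → EReal) : Prop :=
  Convex ℝ {p : X × ℝ | f p.1 ≤ (p.2 : EReal)}

/-- Properness of an extended-real-valued function. -/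
def EProper {X : Type*} (f : X → EReal) : Prop :=
  (∀ y, f y ≠ ⊥) ∧ ∃ y, f y ≠ ⊤

/-- Lower semicontinuous (closed) hull: supremum of all lsc minorants. -/
def clHull {X : Type*} [TopologicalSpace X] (f : X → EReal) : X → EReal :=
  fun x => sSup {r : EReal | ∃ g : X → EReal, LowerSemicontinuous g ∧ g ≤ f ∧ g x = r}

open Classical in
/-- Indicator function with values in `EReal`. -/
def eInd {X : Type*} (C : Set X) (x : X) : EReal := if x ∈ C then 0 else ⊤

/-- Support function of a set. -/
def suppFn {X : Type*} [NormedAddCommGroup X] [InnerProductSpace ℝ X]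
    (A : Set X) (x : X) : EReal := ⨆ a ∈ A, ((⟪a, x⟫ : ℝ) : EReal)
section AuxLemmas
open Filter Topology

lemma lsc_liminf {X : Type*} [TopologicalSpace X] (f : X → EReal) :
    LowerSemicontinuous fun x => liminf f (𝓝 x) := by
  intro x c hc
  simp only [] at hc
  rw [show liminf f (𝓝 x) = sSup {a | ∀ᶠ n in 𝓝 x, a ≤ f n} from liminf_eq] at hc
  obtain ⟨a, ha, hca⟩ := lt_sSup_iff.mp hc
  obtain ⟨U, hUf, hUo, hxU⟩ := eventually_nhds_iff.mp ha
  refine eventually_nhds_iff.mpr ⟨U, fun z hz => ?_, hUo, hxU⟩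
  have : a ≤ liminf f (𝓝 z) :=
    le_liminf_of_le (by isBoundedDefault)
      (eventually_nhds_iff.mpr ⟨U, hUf, hUo, hz⟩)
  exact lt_of_lt_of_le hca this

lemma liminf_nhds_le {X : Type*} [TopologicalSpace X] (f : X → EReal) (x : X) :
    liminf f (𝓝 x) ≤ f x := by
  refine liminf_le_of_frequently_le' ?_
  intro h
  exact absurd le_rfl h.self_of_nhds

lemma lsc_le_liminf {X : Type*} [TopologicalSpace X] {g f : X → EReal}
    (hg : LowerSemicontinuous g) (hgf : g ≤ f) (x : X) :
    g x ≤ liminf f (𝓝 x) := by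
  refine le_of_forall_lt fun c hc => ?_
  obtain ⟨c', hcc', hc'⟩ := exists_between hc
  have hev : ∀ᶠ y in 𝓝 x, c' ≤ f y := (hg x c' hc').mono fun y hy => (le_of_lt hy).trans (hgf y)
  exact lt_of_lt_of_le hcc' (le_liminf_of_le (by isBoundedDefault) hev)

lemma clHull_eq_liminf {X : Type*} [TopologicalSpace X] (f : X → EReal) :
    clHull f = fun x => liminf f (𝓝 x) := by
  funext x
  apply le_antisymm
  · apply sSup_le
    rintro r ⟨g, hg, hgf, rfl⟩
    exact lsc_le_liminf hg hgf x
  · exact le_sSup ⟨fun y => liminf f (𝓝 y), lsc_liminf f, fun y => liminf_nhds_le f y, rfl⟩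

lemma epi_liminf_eq_closure {X : Type*} [TopologicalSpace X] (f : X → EReal) :
    {p : X × ℝ | liminf f (𝓝 p.1) ≤ (p.2 : EReal)}
      = closure {p : X × ℝ | f p.1 ≤ (p.2 : EReal)} := by
  apply Subset.antisymm
  · rintro ⟨x, t⟩ h
    rw [mem_closure_iff_nhds]
    intro N hN
    rw [nhds_prod_eq] at hN
    obtain ⟨U, hU, V, hV, hUV⟩ := Filter.mem_prod_iff.mp hN
    obtain ⟨ε, hε, hball⟩ := Metric.mem_nhds_iff.mp hV
    by_cases hcase : ∀ y ∈ U, (↑(t + ε/2) : EReal) ≤ f y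
    · exfalso
      have h1 : (↑(t + ε/2) : EReal) ≤ liminf f (𝓝 x) :=
        le_liminf_of_le (by isBoundedDefault) (eventually_iff_exists_mem.mpr ⟨U, hU, hcase⟩)
      have h2 : (↑(t + ε/2) : EReal) ≤ (t : EReal) := h1.trans h
      rw [EReal.coe_le_coe_iff] at h2; linarith
    · push_neg at hcase
      obtain ⟨y, hyU, hy⟩ := hcase
      by_cases hle : f y ≤ (t : EReal)
      · refine ⟨(y, t), hUV (mk_mem_prod hyU (hball ?_)), hle⟩
        simp [Metric.mem_ball, hε]
      · push_neg at hle
        have hbot : f y ≠ ⊥ := fun hb => by simp [hb] at hle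
        have htop : f y ≠ ⊤ := fun ht => by simp [ht] at hy
        set r := (f y).toReal with hr
        have hfy : f y = (r : EReal) := (EReal.coe_toReal htop hbot).symm
        refine ⟨(y, r), hUV (mk_mem_prod hyU (hball ?_)), le_of_eq hfy⟩
        rw [hfy] at hle hy
        rw [EReal.coe_lt_coe_iff] at hle hy
        simp only [Metric.mem_ball, Real.dist_eq, abs_lt]
        constructor <;> linarith
  · have hcl : IsClosed {p : X × ℝ | liminf f (𝓝 p.1) ≤ (p.2 : EReal)} := by
      have h2 : IsClosed {p : X × EReal | liminf f (𝓝 p.1) ≤ p.2} :=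
        (lsc_liminf f).isClosed_epigraph
      have heq : {p : X × ℝ | liminf f (𝓝 p.1) ≤ (p.2 : EReal)} =
          (fun p : X × ℝ => (p.1, (p.2 : EReal))) ⁻¹'
            {p : X × EReal | liminf f (𝓝 p.1) ≤ p.2} := rfl
      rw [heq]
      exact h2.preimage (continuous_fst.prodMk (continuous_coe_real_ereal.comp continuous_snd))
    exact hcl.closure_subset_iff.mpr fun p hp => (liminf_nhds_le f p.1).trans hp

lemma dichotomy {n : ℕ} (f : E n → EReal) (hconv : EpiConvex f)
    (himp : ∃ x, clHull f x = ⊥) (x : E n) : clHull f x = ⊥ ∨ clHull f x = ⊤ := by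
  obtain ⟨x0, hx0⟩ := himp
  by_contra hcon
  push_neg at hcon
  obtain ⟨h1, h2⟩ := hcon
  have hgfun := clHull_eq_liminf f
  have hlsc : LowerSemicontinuous (clHull f) := hgfun ▸ lsc_liminf f
  have hepi : {p : E n × ℝ | clHull f p.1 ≤ (p.2 : EReal)}
      = closure {p : E n × ℝ | f p.1 ≤ (p.2 : EReal)} := by
    rw [hgfun]; exact epi_liminf_eq_closure f
  have hconvg : Convex ℝ {p : E n × ℝ | clHull f p.1 ≤ (p.2 : EReal)} := by
    rw [hepi]; exact hconv.closure
  have hr : clHull f x = (((clHull f x).toReal : ℝ) : EReal) := (EReal.coe_toReal h2 h1).symm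
  set r := (clHull f x).toReal with hrdef
  have hseg : ∀ l : ℝ, 0 < l → l < 1 → clHull f (l • x0 + (1 - l) • x) = ⊥ := by
    intro l hl0 hl1
    have hall : ∀ c : ℝ, clHull f (l • x0 + (1 - l) • x) ≤ (c : EReal) := by
      intro c
      set s : ℝ := (c - (1 - l) * r) / l with hs
      have hmem0 : (x0, s) ∈ {p : E n × ℝ | clHull f p.1 ≤ (p.2 : EReal)} := by
        simp only [mem_setOf_eq, hx0]; exact bot_le
      have hmemx : (x, r) ∈ {p : E n × ℝ | clHull f p.1 ≤ (p.2 : EReal)} := by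
        simp only [mem_setOf_eq]; exact le_of_eq hr
      have hcomb := hconvg hmem0 hmemx (le_of_lt hl0)
        (by linarith : (0:ℝ) ≤ 1 - l) (by ring : l + (1 - l) = 1)
      have hpt : l • ((x0, s) : E n × ℝ) + (1 - l) • (x, r)
          = (l • x0 + (1 - l) • x, l * s + (1 - l) * r) := rfl
      rw [hpt] at hcomb
      have hval : l * s + (1 - l) * r = c := by
        rw [hs]; field_simp [hl0.ne'] <;> ring
      rw [hval] at hcomb
      exact hcomb
    by_contra hne
    obtain ⟨c, hc⟩ : ∃ c : ℝ, (c : EReal) < clHull f (l • x0 + (1 - l) • x) := by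
      rcases eq_or_ne (clHull f (l • x0 + (1 - l) • x)) ⊤ with ht | ht
      · exact ⟨0, ht ▸ (by simp : ((0:ℝ) : EReal) < ⊤)⟩
      · have : clHull f (l • x0 + (1 - l) • x)
            = (((clHull f (l • x0 + (1 - l) • x)).toReal : ℝ) : EReal) :=
          (EReal.coe_toReal ht hne).symm
        obtain ⟨w, hw⟩ : ∃ w : ℝ, clHull f (l • x0 + (1 - l) • x) = (w : EReal) := ⟨_, this⟩
        exact ⟨w - 1, by rw [hw]; exact EReal.coe_lt_coe_iff.mpr (by linarith)⟩
    exact absurd (hall c) (not_le.mpr hc)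
  have hbotlt : (⊥ : EReal) < clHull f x := Ne.bot_lt h1
  have hev : ∀ᶠ y in 𝓝 x, (⊥ : EReal) < clHull f y := hlsc x ⊥ hbotlt
  have htend : Tendsto (fun l : ℝ => l • x0 + (1 - l) • x) (𝓝[>] (0:ℝ)) (𝓝 x) := by
    have hcont : Continuous (fun l : ℝ => l • x0 + (1 - l) • x) :=
      (continuous_id.smul continuous_const).add
        ((continuous_const.sub continuous_id).smul continuous_const)
    have := hcont.tendsto 0
    simp only [zero_smul, sub_zero, one_smul, zero_add] at this
    exact this.mono_left nhdsWithin_le_nhds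
  have hev2 : ∀ᶠ l in 𝓝[>] (0:ℝ), (⊥ : EReal) < clHull f (l • x0 + (1 - l) • x) :=
    htend.eventually hev
  have hev3 : ∀ᶠ l in 𝓝[>] (0:ℝ), 0 < l ∧ l < 1 := by
    filter_upwards [self_mem_nhdsWithin,
      eventually_nhdsWithin_of_eventually_nhds (tendsto_id.eventually_lt_const (by norm_num : (0:ℝ) < 1))] with l hl hl1
    exact ⟨hl, hl1⟩
  obtain ⟨l, hlbot, hl0, hl1⟩ := (hev2.and hev3).exists
  rw [hseg l hl0 hl1] at hlbot
  exact absurd hlbot (lt_irrefl _)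

end AuxLemmas

/-- if `f` is convex with nonempty domain and `cl f` is improper, then
`cl(f⁺) = (cl f)⁺ = I_{dom (cl f)}`. -/
theorem stmt3 {n : ℕ} (f : E n → EReal) (hconv : EpiConvex f)
    (hdom : ∃ x, f x ≠ ⊤) (himp : ∃ x, clHull f x = ⊥) :
    clHull (fun x => max (f x) 0) = (fun x => max (clHull f x) 0) ∧
    (fun x => max (clHull f x) 0) = eInd {x | clHull f x ≠ ⊤} := by
  open Filter Topology in
  have hd : ∀ x, clHull f x = ⊥ ∨ clHull f x = ⊤ := dichotomy f hconv himp
  constructor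
  · funext x
    have hL : clHull (fun y => max (f y) 0) x = liminf (fun y => max (f y) 0) (𝓝 x) := by
      rw [clHull_eq_liminf]
    have hLf : clHull f x = liminf f (𝓝 x) := by rw [clHull_eq_liminf]
    rcases hd x with h | h
    · rw [hL, h]
      have hb : liminf f (𝓝 x) = ⊥ := hLf ▸ h
      have hge : (0 : EReal) ≤ liminf (fun y => max (f y) 0) (𝓝 x) :=
        le_liminf_of_le (by isBoundedDefault) (Eventually.of_forall fun y => le_max_right _ _)
      have hle : liminf (fun y => max (f y) 0) (𝓝 x) ≤ 0 := by
        by_contra hlt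
        push_neg at hlt
        have hev : ∀ᶠ y in 𝓝 x, (0 : EReal) < max (f y) 0 := eventually_lt_of_lt_liminf hlt
        have hev2 : ∀ᶠ y in 𝓝 x, (0 : EReal) ≤ f y := hev.mono fun y hy => by
          rcases le_or_gt (f y) 0 with h' | h'
          · rw [max_eq_right h'] at hy; exact absurd hy (lt_irrefl _)
          · exact h'.le
        have h0 : (0 : EReal) ≤ liminf f (𝓝 x) :=
          le_liminf_of_le (by isBoundedDefault) hev2
        rw [hb] at h0
        exact absurd h0 (by simp)
      have : liminf (fun y => max (f y) 0) (𝓝 x) = 0 := le_antisymm hle hge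
      rw [this]
      simp
    · rw [hL, h]
      have hb : liminf f (𝓝 x) = ⊤ := hLf ▸ h
      have hge : (⊤ : EReal) ≤ liminf (fun y => max (f y) 0) (𝓝 x) := by
        rw [← hb]
        exact liminf_le_liminf (Eventually.of_forall fun y => le_max_left _ _)
      simp [top_le_iff.mp hge]
  · funext x
    rcases hd x with h | h
    · have : x ∈ {x | clHull f x ≠ ⊤} := by simp [h]
      simp [eInd, this, h]
    · have : x ∉ {x | clHull f x ≠ ⊤} := by simp [h]
      simp [eInd, this, h]
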